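/- The lattice of normal subgroups of ZM(m,n,r) contains a sublattice isomorphic to the divisor lattice of n, namely {⟨a, b^{n₁}⟩ : n₁ | n}, with ⟨a, b^{n₁}⟩ ⊆ ⟨a, b^{n₂}⟩ if and only if n₂ | n₁. -/

import Mathlib

def ZMrels (m n : ℕ) (r : ℤ) : Set (FreeGroup Bool) :=
  {FreeGroup.of true ^ m, FreeGroup.of false ^ n,
   (FreeGroup.of false)⁻¹ * FreeGroup.of true * FreeGroup.of false * (FreeGroup.of true) ^ (-r)}

abbrev ZM (m n : ℕ) (r : ℤ) : Type := PresentedGroup (ZMrels m n r)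

def ZMa (m n : ℕ) (r : ℤ) : ZM m n r := PresentedGroup.of true

def ZMb (m n : ℕ) (r : ℤ) : ZM m n r := PresentedGroup.of false

namespace ZMaux

/-! ### generic group lemmas -/

variable {G : Type*} [Group G]

theorem conjz (a b : G) (r : ℤ) (h : b⁻¹ * a * b = a ^ r) (k : ℤ) :
    b⁻¹ * a ^ k * b = a ^ (r * k) := by
  have h1 : (b⁻¹ * a * b⁻¹⁻¹) ^ k = b⁻¹ * a ^ k * b⁻¹⁻¹ := conj_zpow
  rw [inv_inv] at h1
  rw [← h1, h, ← zpow_mul]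

theorem swap (a b : G) (r : ℤ) (h : b⁻¹ * a * b = a ^ r) (j : ℕ) :
    a * b ^ j = b ^ j * a ^ (r ^ j) := by
  induction j with
  | zero => simp
  | succ j ih =>
    have h2 := conjz a b r h (r ^ j)
    calc a * b ^ (j + 1) = (a * b ^ j) * b := by rw [pow_succ]; group
      _ = b ^ j * a ^ (r ^ j) * b := by rw [ih]
      _ = b ^ j * b * (b⁻¹ * a ^ (r ^ j) * b) := by group
      _ = b ^ (j + 1) * a ^ (r ^ (j + 1)) := by rw [h2, ← pow_succ, ← pow_succ']

theorem conj_a (a b : G) (r : ℤ) (h : b⁻¹ * a * b = a ^ r) (j : ℕ) :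
    a * b ^ j * a⁻¹ = b ^ j * a ^ (r ^ j - 1) := by
  rw [swap a b r h j]; rw [zpow_sub, zpow_one]; group

theorem conj_ainv (a b : G) (r : ℤ) (h : b⁻¹ * a * b = a ^ r) (j : ℕ) :
    a⁻¹ * b ^ j * a = b ^ j * a ^ (1 - r ^ j) := by
  have hs := swap a b r h j
  calc a⁻¹ * b ^ j * a = a⁻¹ * (b ^ j * a ^ (r ^ j)) * (a ^ (r ^ j))⁻¹ * a := by group
    _ = a⁻¹ * (a * b ^ j) * (a ^ (r ^ j))⁻¹ * a := by rw [hs]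
    _ = b ^ j * a ^ (1 - r ^ j) := by rw [zpow_sub, zpow_one]; group

theorem conj_binv (a b : G) (r : ℤ) (h : b⁻¹ * a * b = a ^ r) (j : ℕ) :
    (b ^ j)⁻¹ * a * b ^ j = a ^ (r ^ j) := by
  have hs := swap a b r h j
  calc (b ^ j)⁻¹ * a * b ^ j = (b ^ j)⁻¹ * (a * b ^ j) := by group
    _ = (b ^ j)⁻¹ * (b ^ j * a ^ (r ^ j)) := by rw [hs]
    _ = a ^ (r ^ j) := by group

theorem conj_b (a b : G) (r : ℤ) (h : b⁻¹ * a * b = a ^ r) {n : ℕ} (hn : 0 < n)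
    (hb : b ^ n = 1) : b * a * b⁻¹ = a ^ (r ^ (n - 1)) := by
  have hbinv : b⁻¹ = b ^ (n - 1) := by
    apply inv_eq_of_mul_eq_one_right
    rw [← pow_succ' b (n-1), Nat.sub_add_cancel hn, hb]
  calc b * a * b⁻¹ = (b ^ (n-1))⁻¹ * a * b ^ (n-1) := by rw [← hbinv]; group
    _ = a ^ (r ^ (n-1)) := conj_binv a b r h (n-1)

theorem conj_closure_le (s : Set G) (g : G)
    (hg : ∀ x ∈ s, g * x * g⁻¹ ∈ Subgroup.closure s) :
    ∀ x ∈ Subgroup.closure s, g * x * g⁻¹ ∈ Subgroup.closure s := by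
  intro x hx
  induction hx using Subgroup.closure_induction with
  | mem y hy => exact hg y hy
  | one => simpa using Subgroup.one_mem _
  | mul y z hy hz ihy ihz =>
    have : g * (y * z) * g⁻¹ = (g * y * g⁻¹) * (g * z * g⁻¹) := by group
    rw [this]; exact Subgroup.mul_mem _ ihy ihz
  | inv y hy ihy =>
    have : g * y⁻¹ * g⁻¹ = (g * y * g⁻¹)⁻¹ := by group
    rw [this]; exact Subgroup.inv_mem _ ihy

theorem normal_of_conj (s : Set G) (gens : Set G) (htop : Subgroup.closure gens = ⊤)
    (hc : ∀ g ∈ gens, (∀ x ∈ s, g * x * g⁻¹ ∈ Subgroup.closure s) ∧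
      (∀ x ∈ s, g⁻¹ * x * g⁻¹⁻¹ ∈ Subgroup.closure s)) :
    (Subgroup.closure s).Normal := by
  rw [← Subgroup.normalizer_eq_top_iff]
  rw [eq_top_iff, ← htop]
  rw [Subgroup.closure_le]
  intro g hg
  rw [SetLike.mem_coe, Subgroup.mem_normalizer_iff]
  intro h
  constructor
  · intro hh
    have := conj_closure_le s g (hc g hg).1 h hh
    simpa [mul_assoc] using this
  · intro hh
    have := conj_closure_le s g⁻¹ (hc g hg).2 _ hh
    have h2 : g⁻¹ * (g * h * g⁻¹) * g⁻¹⁻¹ = h := by group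
    rwa [h2] at this

/-! ### ZMod arithmetic -/

lemma zpowers_ofAdd_mem {n : ℕ} (d : ℕ) (hd : d ∣ n) (k : ℤ) :
    Multiplicative.ofAdd ((k : ZMod n)) ∈
      Subgroup.zpowers (Multiplicative.ofAdd ((d : ZMod n))) ↔ (d : ℤ) ∣ k := by
  constructor
  · rintro ⟨j, hj⟩
    have h1 : j • ((d : ℕ) : ZMod n) = ((k : ℤ) : ZMod n) := by
      have := congrArg Multiplicative.toAdd hj
      simpa using this
    have h2 : ((j * (d:ℤ) : ℤ) : ZMod n) = ((k : ℤ) : ZMod n) := by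
      rw [← h1, zsmul_eq_mul]; push_cast; ring
    have h3 : (n : ℤ) ∣ k - j * d :=
      ((ZMod.intCast_eq_intCast_iff _ _ _).mp h2).dvd
    have hdn : (d : ℤ) ∣ (n : ℤ) := Int.natCast_dvd_natCast.mpr hd
    have h4 : (d : ℤ) ∣ k - j * d := dvd_trans hdn h3
    have h5 : k = (k - j * d) + j * d := by ring
    rw [h5]
    exact dvd_add h4 (dvd_mul_left _ _)
  · rintro ⟨t, rfl⟩
    refine ⟨t, ?_⟩
    have h : t • ((d:ℕ) : ZMod n) = (((d:ℤ) * t : ℤ) : ZMod n) := by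
      rw [zsmul_eq_mul]; push_cast; ring
    show (Multiplicative.ofAdd ((d : ZMod n))) ^ t = _
    rw [← ofAdd_zsmul, h]

lemma exists_intCast {n : ℕ} (hn : 0 < n) (y : ZMod n) : ∃ k : ℤ, ((k : ℤ) : ZMod n) = y := by
  haveI : NeZero n := ⟨hn.ne'⟩
  exact ⟨(y.val : ℤ), by push_cast; exact ZMod.natCast_rightInverse y⟩

lemma int_lcm_cast (n₁ n₂ : ℕ) : Int.lcm (n₁ : ℤ) (n₂ : ℤ) = Nat.lcm n₁ n₂ := by
  simp [Int.lcm]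

lemma zpowers_inf {n : ℕ} (hn : 0 < n) (n₁ n₂ : ℕ) (h1 : n₁ ∣ n) (h2 : n₂ ∣ n) :
    Subgroup.zpowers (Multiplicative.ofAdd ((n₁ : ZMod n))) ⊓
      Subgroup.zpowers (Multiplicative.ofAdd ((n₂ : ZMod n))) =
    Subgroup.zpowers (Multiplicative.ofAdd ((Nat.lcm n₁ n₂ : ZMod n))) := by
  apply le_antisymm
  · intro x hx
    obtain ⟨hx1, hx2⟩ := Subgroup.mem_inf.mp hx
    obtain ⟨k, hk⟩ := exists_intCast hn (Multiplicative.toAdd x)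
    have hxk : x = Multiplicative.ofAdd ((k : ZMod n)) := by
      rw [hk]; rfl
    rw [hxk] at hx1 hx2 ⊢
    have d1 := (zpowers_ofAdd_mem n₁ h1 k).mp hx1
    have d2 := (zpowers_ofAdd_mem n₂ h2 k).mp hx2
    have dl : ((Nat.lcm n₁ n₂ : ℕ) : ℤ) ∣ k := by
      rw [← int_lcm_cast n₁ n₂]
      exact Int.ofNat_dvd_left.mpr (Int.lcm_dvd (Int.dvd_natAbs.mpr d1) (Int.dvd_natAbs.mpr d2))
    exact (zpowers_ofAdd_mem (Nat.lcm n₁ n₂) (Nat.lcm_dvd h1 h2) k).mpr dl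
  · rw [Subgroup.zpowers_le, Subgroup.mem_inf]
    have hc : ((Nat.lcm n₁ n₂ : ℕ) : ZMod n) = (((Nat.lcm n₁ n₂ : ℕ) : ℤ) : ZMod n) := by
      push_cast; ring
    rw [hc]
    constructor
    · exact (zpowers_ofAdd_mem n₁ h1 _).mpr
        (Int.natCast_dvd_natCast.mpr (Nat.dvd_lcm_left n₁ n₂))
    · exact (zpowers_ofAdd_mem n₂ h2 _).mpr
        (Int.natCast_dvd_natCast.mpr (Nat.dvd_lcm_right n₁ n₂))

end ZMaux

namespace ZMproof

open ZMaux Subgroup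

variable (m n : ℕ) (r : ℤ)

lemma rel_mem (x : FreeGroup Bool) (hx : x ∈ ZMrels m n r) :
    PresentedGroup.mk (ZMrels m n r) x = 1 :=
  (QuotientGroup.eq_one_iff x).mpr (Subgroup.subset_normalClosure hx)

lemma b_pow_n : ZMb m n r ^ n = 1 := by
  have := rel_mem m n r (FreeGroup.of false ^ n) (by simp [ZMrels])
  simpa [ZMb, PresentedGroup.of, map_pow] using this

lemma rel3 : (ZMb m n r)⁻¹ * ZMa m n r * ZMb m n r = ZMa m n r ^ r := by
  have := rel_mem m n r ((FreeGroup.of false)⁻¹ * FreeGroup.of true * FreeGroup.of false *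
      (FreeGroup.of true) ^ (-r)) (by simp [ZMrels])
  simp only [map_mul, map_inv, map_zpow] at this
  have h2 : (ZMb m n r)⁻¹ * ZMa m n r * ZMb m n r * (ZMa m n r) ^ (-r) = 1 := this
  calc (ZMb m n r)⁻¹ * ZMa m n r * ZMb m n r
      = (ZMb m n r)⁻¹ * ZMa m n r * ZMb m n r * (ZMa m n r) ^ (-r) * (ZMa m n r) ^ r := by group
    _ = ZMa m n r ^ r := by rw [h2]; group

lemma closure_ab : Subgroup.closure {ZMa m n r, ZMb m n r} = ⊤ := by
  have hr : Set.range (PresentedGroup.of : Bool → ZM m n r) = {ZMa m n r, ZMb m n r} := by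
    ext x
    constructor
    · rintro ⟨c, rfl⟩
      cases c
      · exact Set.mem_insert_iff.mpr (Or.inr rfl)
      · exact Set.mem_insert _ _
    · intro hx
      rcases hx with rfl | hx
      · exact ⟨true, rfl⟩
      · rw [Set.mem_singleton_iff] at hx
        subst hx
        exact ⟨false, rfl⟩
  rw [← hr]
  exact PresentedGroup.closure_range_of _

lemma normalH (hn : 0 < n) (n₁ : ℕ) :
    (Subgroup.closure {ZMa m n r, ZMb m n r ^ n₁} : Subgroup (ZM m n r)).Normal := by
  set a := ZMa m n r
  set b := ZMb m n r
  have hrel := rel3 m n r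
  have hbn := b_pow_n m n r
  have hamem : a ∈ Subgroup.closure {a, b ^ n₁} := Subgroup.subset_closure (Set.mem_insert _ _)
  have hbmem : b ^ n₁ ∈ Subgroup.closure {a, b ^ n₁} :=
    Subgroup.subset_closure (Set.mem_insert_iff.mpr (Or.inr rfl))
  apply normal_of_conj _ _ (closure_ab m n r)
  rintro g (rfl | rfl)
  · constructor
    · rintro x (rfl | rfl)
      · have h : a * a * a⁻¹ = a := by group
        rw [h]; exact hamem
      · rw [conj_a _ _ _ hrel n₁]
        exact mul_mem hbmem (Subgroup.zpow_mem _ hamem _)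
    · rintro x (rfl | rfl)
      · have h : a⁻¹ * a * a⁻¹⁻¹ = a := by group
        rw [h]; exact hamem
      · rw [inv_inv, conj_ainv _ _ _ hrel n₁]
        exact mul_mem hbmem (Subgroup.zpow_mem _ hamem _)
  · constructor
    · rintro x (rfl | rfl)
      · rw [conj_b _ _ _ hrel hn hbn]
        exact Subgroup.zpow_mem _ hamem _
      · have h : b * b ^ n₁ * b⁻¹ = b ^ n₁ := by group
        rw [h]; exact hbmem
    · rintro x (rfl | rfl)
      · rw [inv_inv, hrel]
        exact Subgroup.zpow_mem _ hamem _
      · have h : b⁻¹ * b ^ n₁ * b⁻¹⁻¹ = b ^ n₁ := by group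
        rw [h]; exact hbmem

def piF (n : ℕ) : Bool → Multiplicative (ZMod n) :=
  fun x => if x then 1 else Multiplicative.ofAdd 1

lemma pi_rels : ∀ x ∈ ZMrels m n r, FreeGroup.lift (piF n) x = 1 := by
  intro x hx
  simp only [ZMrels, Set.mem_insert_iff, Set.mem_singleton_iff] at hx
  rcases hx with rfl | rfl | rfl
  · rw [map_pow, FreeGroup.lift_apply_of]
    simp [piF]
  · rw [map_pow, FreeGroup.lift_apply_of]
    show (Multiplicative.ofAdd (1 : ZMod n)) ^ n = 1
    rw [← ofAdd_nsmul]
    have h : n • (1 : ZMod n) = 0 := by rw [nsmul_eq_mul, mul_one, ZMod.natCast_self]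
    rw [h, ofAdd_zero]
  · simp [map_mul, map_inv, map_zpow, FreeGroup.lift_apply_of, piF, one_zpow]

def pi : ZM m n r →* Multiplicative (ZMod n) := PresentedGroup.toGroup (pi_rels m n r)

lemma pi_a : pi m n r (ZMa m n r) = 1 := by
  show pi m n r (PresentedGroup.of true) = 1
  rw [pi, PresentedGroup.toGroup.of]
  simp [piF]

lemma pi_b : pi m n r (ZMb m n r) = Multiplicative.ofAdd (1 : ZMod n) := by
  show pi m n r (PresentedGroup.of false) = _
  rw [pi, PresentedGroup.toGroup.of]
  simp [piF]

lemma pi_b_zpow (k : ℤ) :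
    pi m n r (ZMb m n r ^ k) = Multiplicative.ofAdd ((k : ZMod n)) := by
  rw [map_zpow, pi_b, ← ofAdd_zsmul]
  congr 1
  rw [zsmul_eq_mul, mul_one]

lemma pi_b_pow (k : ℕ) :
    pi m n r (ZMb m n r ^ k) = Multiplicative.ofAdd (((k : ℤ) : ZMod n)) := by
  have h := pi_b_zpow m n r (k : ℤ)
  rwa [zpow_natCast] at h

lemma H_le_comap {n₁ : ℕ} (h1 : n₁ ∣ n) :
    Subgroup.closure {ZMa m n r, ZMb m n r ^ n₁} ≤
      Subgroup.comap (pi m n r)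
        (Subgroup.zpowers (Multiplicative.ofAdd ((n₁ : ZMod n)))) := by
  rw [Subgroup.closure_le]
  rintro x (rfl | rfl)
  · rw [SetLike.mem_coe, Subgroup.mem_comap, pi_a]
    exact Subgroup.one_mem _
  · rw [SetLike.mem_coe, Subgroup.mem_comap, pi_b_pow]
    exact (zpowers_ofAdd_mem n₁ h1 (n₁ : ℤ)).mpr dvd_rfl

lemma comap_eq (hn : 0 < n) {n₁ : ℕ} (h1 : n₁ ∣ n) :
    (Subgroup.closure {ZMa m n r, ZMb m n r ^ n₁} : Subgroup (ZM m n r)) =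
      Subgroup.comap (pi m n r)
        (Subgroup.zpowers (Multiplicative.ofAdd ((n₁ : ZMod n)))) := by
  set a := ZMa m n r
  set b := ZMb m n r
  set H := (Subgroup.closure {a, b ^ n₁} : Subgroup (ZM m n r)) with hH
  apply le_antisymm (H_le_comap m n r h1)
  intro g hg
  haveI : H.Normal := normalH m n r hn n₁
  have htop' : H ⊔ Subgroup.zpowers b = ⊤ := by
    rw [eq_top_iff, ← closure_ab m n r, Subgroup.closure_le]
    rintro x (rfl | rfl)
    · exact Subgroup.mem_sup_left (Subgroup.subset_closure (Set.mem_insert _ _))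
    · exact Subgroup.mem_sup_right (Subgroup.mem_zpowers _)
  have hgm : g ∈ (↑(H ⊔ Subgroup.zpowers b) : Set (ZM m n r)) := by
    rw [htop']
    simp
  rw [Subgroup.normal_mul] at hgm
  obtain ⟨h, hh, bk, hbk, rfl⟩ := hgm
  rw [SetLike.mem_coe] at hh hbk
  obtain ⟨k, rfl⟩ := Subgroup.mem_zpowers_iff.mp hbk
  have hπh : pi m n r h ∈ Subgroup.zpowers (Multiplicative.ofAdd ((n₁ : ZMod n))) :=
    H_le_comap m n r h1 hh
  have hπ : pi m n r (h * b ^ k) ∈ Subgroup.zpowers (Multiplicative.ofAdd ((n₁ : ZMod n))) :=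
    Subgroup.mem_comap.mp hg
  have hπb : pi m n r (b ^ k) ∈ Subgroup.zpowers (Multiplicative.ofAdd ((n₁ : ZMod n))) := by
    have := mul_mem (inv_mem hπh) hπ
    simpa [map_mul] using this
  rw [pi_b_zpow] at hπb
  obtain ⟨t, rfl⟩ := (zpowers_ofAdd_mem n₁ h1 k).mp hπb
  have hb2 : b ^ n₁ ∈ H := Subgroup.subset_closure (Set.mem_insert_iff.mpr (Or.inr rfl))
  have hbm : b ^ ((n₁ : ℤ) * t) ∈ H := by
    rw [zpow_mul, zpow_natCast]
    exact Subgroup.zpow_mem _ hb2 t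
  exact mul_mem hh hbm

lemma H_mono {n₁ n₂ : ℕ} (h : n₂ ∣ n₁) :
    (Subgroup.closure {ZMa m n r, ZMb m n r ^ n₁} : Subgroup (ZM m n r)) ≤
      Subgroup.closure {ZMa m n r, ZMb m n r ^ n₂} := by
  obtain ⟨c, rfl⟩ := h
  rw [Subgroup.closure_le]
  rintro x (rfl | rfl)
  · exact Subgroup.subset_closure (Set.mem_insert _ _)
  · rw [SetLike.mem_coe, pow_mul]
    have hb : ZMb m n r ^ n₂ ∈ Subgroup.closure {ZMa m n r, ZMb m n r ^ n₂} :=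
      Subgroup.subset_closure (Set.mem_insert_iff.mpr (Or.inr rfl))
    exact Subgroup.pow_mem _ hb c

lemma le_iff (hn : 0 < n) {n₁ n₂ : ℕ} (h2 : n₂ ∣ n) :
    (Subgroup.closure {ZMa m n r, ZMb m n r ^ n₁} : Subgroup (ZM m n r)) ≤
      Subgroup.closure {ZMa m n r, ZMb m n r ^ n₂} ↔ n₂ ∣ n₁ := by
  constructor
  · intro hle
    have hb : ZMb m n r ^ n₁ ∈ Subgroup.closure {ZMa m n r, ZMb m n r ^ n₂} :=
      hle (Subgroup.subset_closure (Set.mem_insert_iff.mpr (Or.inr rfl)))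
    rw [comap_eq m n r hn h2, Subgroup.mem_comap, pi_b_pow] at hb
    exact_mod_cast (zpowers_ofAdd_mem n₂ h2 (n₁ : ℤ)).mp hb
  · exact H_mono m n r

end ZMproof

theorem stmt12 (m n : ℕ) (r : ℤ) (hm : 0 < m) (hn : 0 < n)
    (hco : Nat.Coprime m n) (hco2 : IsCoprime (m : ℤ) (r - 1))
    (hr : (m : ℤ) ∣ r ^ n - 1) :
    (∀ n₁ : ℕ, n₁ ∣ n →
      (Subgroup.closure {ZMa m n r, ZMb m n r ^ n₁} : Subgroup (ZM m n r)).Normal) ∧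
    (∀ n₁ n₂ : ℕ, n₁ ∣ n → n₂ ∣ n →
      ((Subgroup.closure {ZMa m n r, ZMb m n r ^ n₁} : Subgroup (ZM m n r)) ≤
          Subgroup.closure {ZMa m n r, ZMb m n r ^ n₂} ↔ n₂ ∣ n₁)) ∧
    (∀ n₁ n₂ : ℕ, n₁ ∣ n → n₂ ∣ n →
      (Subgroup.closure {ZMa m n r, ZMb m n r ^ n₁} : Subgroup (ZM m n r)) ⊔
          Subgroup.closure {ZMa m n r, ZMb m n r ^ n₂}
        = Subgroup.closure {ZMa m n r, ZMb m n r ^ Nat.gcd n₁ n₂}) ∧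
    (∀ n₁ n₂ : ℕ, n₁ ∣ n → n₂ ∣ n →
      (Subgroup.closure {ZMa m n r, ZMb m n r ^ n₁} : Subgroup (ZM m n r)) ⊓
          Subgroup.closure {ZMa m n r, ZMb m n r ^ n₂}
        = Subgroup.closure {ZMa m n r, ZMb m n r ^ Nat.lcm n₁ n₂}) := by
  refine ⟨fun n₁ _ => ZMproof.normalH m n r hn n₁,
    fun n₁ n₂ h1 h2 => ZMproof.le_iff m n r hn h2, ?_, ?_⟩
  · intro n₁ n₂ h1 h2
    apply le_antisymm
    · exact sup_le (ZMproof.H_mono m n r (Nat.gcd_dvd_left n₁ n₂))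
        (ZMproof.H_mono m n r (Nat.gcd_dvd_right n₁ n₂))
    · rw [Subgroup.closure_le]
      rintro x (rfl | rfl)
      · exact Subgroup.mem_sup_left (Subgroup.subset_closure (Set.mem_insert _ _))
      · rw [SetLike.mem_coe]
        set b := ZMb m n r with hb
        have key : b ^ Nat.gcd n₁ n₂ =
            (b ^ n₁) ^ Nat.gcdA n₁ n₂ * (b ^ n₂) ^ Nat.gcdB n₁ n₂ := by
          have hg := Nat.gcd_eq_gcd_ab n₁ n₂
          calc b ^ Nat.gcd n₁ n₂ = b ^ ((Nat.gcd n₁ n₂ : ℤ)) := (zpow_natCast _ _).symm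
            _ = b ^ ((n₁ : ℤ) * Nat.gcdA n₁ n₂ + (n₂ : ℤ) * Nat.gcdB n₁ n₂) := by rw [← hg]
            _ = b ^ ((n₁ : ℤ) * Nat.gcdA n₁ n₂) * b ^ ((n₂ : ℤ) * Nat.gcdB n₁ n₂) :=
                zpow_add _ _ _
            _ = (b ^ (n₁ : ℤ)) ^ Nat.gcdA n₁ n₂ * (b ^ (n₂ : ℤ)) ^ Nat.gcdB n₁ n₂ := by
                rw [zpow_mul, zpow_mul]
            _ = (b ^ n₁) ^ Nat.gcdA n₁ n₂ * (b ^ n₂) ^ Nat.gcdB n₁ n₂ := by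
                rw [zpow_natCast, zpow_natCast]
        rw [key]
        have m1 : b ^ n₁ ∈ Subgroup.closure {ZMa m n r, b ^ n₁} :=
          Subgroup.subset_closure (Set.mem_insert_iff.mpr (Or.inr rfl))
        have m2 : b ^ n₂ ∈ Subgroup.closure {ZMa m n r, b ^ n₂} :=
          Subgroup.subset_closure (Set.mem_insert_iff.mpr (Or.inr rfl))
        exact mul_mem (Subgroup.mem_sup_left (Subgroup.zpow_mem _ m1 _))
          (Subgroup.mem_sup_right (Subgroup.zpow_mem _ m2 _))
  · intro n₁ n₂ h1 h2
    rw [ZMproof.comap_eq m n r hn h1, ZMproof.comap_eq m n r hn h2, ← Subgroup.comap_inf,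
      ZMaux.zpowers_inf hn n₁ n₂ h1 h2, ← ZMproof.comap_eq m n r hn (Nat.lcm_dvd h1 h2)]
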